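/- Let G = (L, B) be a finite graph, let λ > 0, and let p = λ/(1+λ). Then the pushforward of the Widom–Rowlinson Gibbs measure under the map ξ ↦ |ξ| (where |ξ|(x) = |ξ(x)|) is the site-random-cluster measure with q = 2: for every η ∈ {0,1}^L, ψ^G_{p,2}(η) = ∑_{ξ ∈ {−1,0,+1}^L : |ξ| = η} μ^G_λ(ξ). -/

import Mathlib

open Finset

noncomputable section

open scoped Classical

variable {V : Type*}

/-- The factor `p^b (1-p)^(1-b)`. -/
def bWeight (p : ℝ) (b : Bool) : ℝ := if b then p else 1 - p

/-- The number of open clusters of a site configuration `η`: the number of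
connected components of the subgraph of `G` induced by the open vertices. -/
def siteClusters (G : SimpleGraph V) (η : V → Bool) : ℕ :=
  Nat.card (G.induce {x | η x = true}).ConnectedComponent

variable [Fintype V] [DecidableEq V]

/-- Unnormalized site-random-cluster weight. -/
def siteRCWeight (G : SimpleGraph V) (p q : ℝ) (η : V → Bool) : ℝ :=
  (∏ x : V, bWeight p (η x)) * q ^ siteClusters G η

/-- The site-random-cluster measure `ψ^G_{p,q}`. -/
def siteRCMeasure (G : SimpleGraph V) (p q : ℝ) (η : V → Bool) : ℝ :=
  siteRCWeight G p q η / ∑ η' : V → Bool, siteRCWeight G p q η'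

/-- Unnormalized Widom–Rowlinson weight with activity `lam`. -/
def wrWeight (G : SimpleGraph V) (lam : ℝ) (ξ : V → SignType) : ℝ :=
  (if ∀ x y : V, G.Adj x y → ξ x * ξ y ≠ -1 then 1 else 0) *
    ∏ x : V, lam ^ (if ξ x = 0 then 0 else 1)

/-- The Widom–Rowlinson Gibbs measure `μ^G_lam`. -/
def wrMeasure (G : SimpleGraph V) (lam : ℝ) (ξ : V → SignType) : ℝ :=
  wrWeight G lam ξ / ∑ ξ' : V → SignType, wrWeight G lam ξ'

/-- The site configuration `|ξ|` of occupied vertices of `ξ`. -/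
def absConfig (ξ : V → SignType) : V → Bool := fun x => decide (ξ x ≠ 0)


private lemma signAux : ∀ a b : SignType, a ≠ 0 → b ≠ 0 → a * b ≠ -1 → a = b := by decide

private lemma signAux2 : ∀ a b : SignType, a ≠ 0 → a = b → a * b ≠ -1 := by decide

private lemma signAux3 : ∀ a b : SignType, a ≠ 0 → b ≠ 0 → ((a = 1) ↔ (b = 1)) → a = b := by
  decide

private lemma fiber_card (G : SimpleGraph V) (η : V → Bool) :
    (univ.filter (fun ξ : V → SignType => absConfig ξ = η ∧
      ∀ x y : V, G.Adj x y → ξ x * ξ y ≠ -1)).card = 2 ^ siteClusters G η := by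
  set S : Set V := {x | η x = true} with hS
  set H := G.induce S with hH
  let P : (V → SignType) → Prop := fun ξ => absConfig ξ = η ∧
      ∀ x y : V, G.Adj x y → ξ x * ξ y ≠ -1
  have mem_ne : ∀ (ξ : V → SignType), absConfig ξ = η → ∀ x : V, η x = true → ξ x ≠ 0 := by
    intro ξ hξ x hx
    have := congrFun hξ x
    rw [hx] at this
    simpa [absConfig] using this
  have mem_eq : ∀ (ξ : V → SignType), absConfig ξ = η → ∀ x : V, η x = false → ξ x = 0 := by
    intro ξ hξ x hx
    have := congrFun hξ x
    rw [hx] at this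
    simpa [absConfig] using this
  have const : ∀ (ξ : V → SignType), P ξ → ∀ (a b : S) (w : H.Walk a b), ξ a = ξ b := by
    intro ξ hξ a b w
    induction w with
    | nil => rfl
    | cons h _ ih =>
      rename_i u v _ _
      have hadj : G.Adj u.1 v.1 := h
      have hu : ξ u.1 ≠ 0 := mem_ne ξ hξ.1 u.1 u.2
      have hv : ξ v.1 ≠ 0 := mem_ne ξ hξ.1 v.1 v.2
      exact (signAux _ _ hu hv (hξ.2 _ _ hadj)).trans ih
  have key : Nat.card {ξ : V → SignType // P ξ} = Nat.card (H.ConnectedComponent → Bool) := by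
    refine Nat.card_congr ?_
    refine Equiv.ofBijective (fun ξ => fun c =>
      c.lift (fun v => decide (ξ.1 v.1 = 1)) ?_) ⟨?_, ?_⟩
    · intro v w p _
      simp [const ξ.1 ξ.2 v w p]
    · rintro ⟨ξ, hξ⟩ ⟨ζ, hζ⟩ hfg
      ext x
      by_cases hx : η x = true
      · show ξ x = ζ x
        have h1 := congrFun hfg (H.connectedComponentMk ⟨x, hx⟩)
        simp only [SimpleGraph.ConnectedComponent.lift_mk, decide_eq_decide] at h1
        have hξx := mem_ne ξ hξ.1 x hx
        have hζx := mem_ne ζ hζ.1 x hx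
        exact signAux3 _ _ hξx hζx h1
      · show ξ x = ζ x
        rw [mem_eq ξ hξ.1 x (by simpa using hx), mem_eq ζ hζ.1 x (by simpa using hx)]
    · intro f
      refine ⟨⟨fun x => if hx : η x = true then
        (if f (H.connectedComponentMk ⟨x, hx⟩) then 1 else -1) else 0, ?_, ?_⟩, ?_⟩
      · funext x
        by_cases hx : η x = true
        · simp only [absConfig, hx, dif_pos hx]
          split
          · split <;> simp
          · simp_all
        · simp [absConfig, hx]
      · intro x y hxy
        by_cases hx : η x = true
        · by_cases hy : η y = true
          · have hcomp : H.connectedComponentMk ⟨x, hx⟩ = H.connectedComponentMk ⟨y, hy⟩ :=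
              SimpleGraph.ConnectedComponent.connectedComponentMk_eq_of_adj (by exact hxy)
            simp only [dif_pos hx, dif_pos hy, hcomp]
            apply signAux2
            · split <;> simp
            · rfl
          · simp [dif_neg hy]
        · simp [dif_neg hx]
      · funext c
        induction c using SimpleGraph.ConnectedComponent.ind with
        | _ v =>
          have hv : η v.1 = true := v.2
          simp only [SimpleGraph.ConnectedComponent.lift_mk]
          by_cases hf : f (H.connectedComponentMk v) <;>
            simp [hv, Subtype.coe_eta, hf]
  have card1 : (univ.filter (fun ξ : V → SignType => P ξ)).card
      = Nat.card {ξ : V → SignType // P ξ} := by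
    rw [Nat.card_eq_fintype_card, Fintype.card_subtype]
  show (univ.filter (fun ξ : V → SignType => P ξ)).card = 2 ^ siteClusters G η
  rw [card1, key, Nat.card_fun, Nat.card_eq_fintype_card (α := Bool), Fintype.card_bool]
  rfl

private lemma prod_lam_pow (lam : ℝ) (ξ : V → SignType) (η : V → Bool)
    (h : absConfig ξ = η) :
    (∏ x : V, lam ^ (if ξ x = 0 then 0 else 1)) =
      lam ^ (univ.filter (fun x => η x = true)).card := by
  have key : ∀ x : V, (if ξ x = 0 then 0 else 1) = (if η x = true then 1 else 0) := by
    intro x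
    have : decide (ξ x ≠ 0) = η x := congrFun h x
    by_cases hξ : ξ x = 0 <;> simp [hξ] at this <;> simp [hξ, this]
  rw [Finset.prod_pow_eq_pow_sum, Finset.sum_congr rfl (fun x _ => key x),
    ← Finset.card_filter]

private lemma fiber_sum (G : SimpleGraph V) (lam : ℝ) (η : V → Bool) :
    ∑ ξ ∈ univ.filter (fun ξ : V → SignType => absConfig ξ = η), wrWeight G lam ξ =
      (2 : ℝ) ^ siteClusters G η * lam ^ (univ.filter (fun x => η x = true)).card := by
  have step : ∀ ξ ∈ univ.filter (fun ξ : V → SignType => absConfig ξ = η),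
      wrWeight G lam ξ = (if (∀ x y : V, G.Adj x y → ξ x * ξ y ≠ -1) then 1 else 0) *
        lam ^ (univ.filter (fun x => η x = true)).card := by
    intro ξ hξ
    rw [mem_filter] at hξ
    rw [wrWeight, prod_lam_pow lam ξ η hξ.2]
  rw [Finset.sum_congr rfl step, ← Finset.sum_mul, Finset.sum_boole,
    Finset.filter_filter, fiber_card]
  push_cast
  ring

/-- The pushforward of the Widom–Rowlinson measure under
`ξ ↦ |ξ|` is the site-random-cluster measure with `q = 2`. -/
theorem siteRC_from_wr (G : SimpleGraph V) (lam : ℝ) (hlam : 0 < lam)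
    (p : ℝ) (hp : p = lam / (1 + lam)) (η : V → Bool) :
    siteRCMeasure G p 2 η =
      ∑ ξ ∈ univ.filter (fun ξ : V → SignType => absConfig ξ = η),
        wrMeasure G lam ξ := by
  have h1 : (0:ℝ) < 1 + lam := by linarith
  set c : ℝ := ((1 + lam)⁻¹) ^ Fintype.card V with hc
  have hcne : c ≠ 0 := pow_ne_zero _ (inv_ne_zero (by linarith))
  have prodB : ∀ η' : V → Bool, (∏ x : V, bWeight p (η' x)) =
      lam ^ (univ.filter (fun x => η' x = true)).card * c := by
    intro η'
    have key : ∀ x : V,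
        bWeight p (η' x) = lam ^ (if η' x = true then 1 else 0) * (1 + lam)⁻¹ := by
      intro x
      by_cases hx : η' x = true <;> simp [bWeight, hx, hp] <;> field_simp <;> ring
    rw [Finset.prod_congr rfl (fun x _ => key x), Finset.prod_mul_distrib,
      Finset.prod_pow_eq_pow_sum, ← Finset.card_filter, Finset.prod_const, Finset.card_univ]
  have wRC : ∀ η' : V → Bool, siteRCWeight G p 2 η' =
      (∑ ξ ∈ univ.filter (fun ξ : V → SignType => absConfig ξ = η'),
        wrWeight G lam ξ) * c := by
    intro η'
    rw [siteRCWeight, prodB, fiber_sum]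
    ring
  have hZ : ∑ η' : V → Bool, siteRCWeight G p 2 η' =
      (∑ ξ' : V → SignType, wrWeight G lam ξ') * c := by
    rw [Finset.sum_congr rfl (fun η' _ => wRC η'), ← Finset.sum_mul,
      Finset.sum_fiberwise univ absConfig (wrWeight G lam)]
  rw [siteRCMeasure, hZ, wRC, mul_div_mul_right _ _ hcne]
  simp only [wrMeasure]
  rw [← Finset.sum_div]
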